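/- For N = 2m even with m ≥ 1, the 2-adic valuation of the number of binary strings of length N having strictly more ones than zeros equals w(N) - 1, where w(N) is the Hamming weight of N. -/
import Mathlib



open Finset

lemma count_true_eq (n k : ℕ) :
    (Finset.univ.filter fun X : Fin n → Bool =>
      (Finset.univ.filter fun i => X i = true).card = k).card = n.choose k := by
  have : n.choose k = (Finset.powersetCard k (Finset.univ : Finset (Fin n))).card := by
    rw [Finset.card_powersetCard, Finset.card_univ, Fintype.card_fin]
  rw [this]
  apply Finset.card_bij' (fun X _ => Finset.univ.filter fun i => X i = true)
    (fun s _ => fun i => decide (i ∈ s))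
  case hi =>
    intro X hX
    simp only [Finset.mem_filter, Finset.mem_univ, true_and] at hX
    simp [Finset.mem_powersetCard, hX]
  case hj =>
    intro s hs
    simp only [Finset.mem_powersetCard] at hs
    simp only [Finset.mem_filter, Finset.mem_univ, true_and]
    rw [← hs.2]
    congr 1
    ext i
    simp
  case left_inv =>
    intro X hX
    funext i
    simp
  case right_inv =>
    intro s hs
    ext i
    simp

lemma count_symm (n : ℕ) :
    (Finset.univ.filter fun X : Fin n → Bool =>
      (Finset.univ.filter fun i => X i = false).card <
        (Finset.univ.filter fun i => X i = true).card).card =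
    (Finset.univ.filter fun X : Fin n → Bool =>
      (Finset.univ.filter fun i => X i = true).card <
        (Finset.univ.filter fun i => X i = false).card).card := by
  apply Finset.card_bij' (fun X _ => fun i => !X i) (fun X _ => fun i => !X i)
  case hi =>
    intro X hX
    simp only [Finset.mem_filter, Finset.mem_univ, true_and, Bool.not_eq_true',
      Bool.not_eq_false'] at *
    convert hX using 2 <;> simp [eq_comm]
  case hj =>
    intro X hX
    simp only [Finset.mem_filter, Finset.mem_univ, true_and, Bool.not_eq_true',
      Bool.not_eq_false'] at *
    convert hX using 2 <;> simp [eq_comm]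
  case left_inv => intro X _; funext i; simp
  case right_inv => intro X _; funext i; simp

lemma count_main (n : ℕ) :
    2 * (Finset.univ.filter fun X : Fin n → Bool =>
      (Finset.univ.filter fun i => X i = false).card <
        (Finset.univ.filter fun i => X i = true).card).card
      + (Finset.univ.filter fun X : Fin n → Bool =>
      (Finset.univ.filter fun i => X i = false).card =
        (Finset.univ.filter fun i => X i = true).card).card = 2 ^ n := by
  have h2 : (Finset.univ.filter fun X : Fin n → Bool =>
      ¬ ((Finset.univ.filter fun i => X i = false).card =
        (Finset.univ.filter fun i => X i = true).card)).card
      = 2 * (Finset.univ.filter fun X : Fin n → Bool =>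
      (Finset.univ.filter fun i => X i = false).card <
        (Finset.univ.filter fun i => X i = true).card).card := by
    have : (Finset.univ.filter fun X : Fin n → Bool =>
      ¬ ((Finset.univ.filter fun i => X i = false).card =
        (Finset.univ.filter fun i => X i = true).card)) =
      (Finset.univ.filter fun X : Fin n → Bool =>
      (Finset.univ.filter fun i => X i = false).card <
        (Finset.univ.filter fun i => X i = true).card) ∪
      (Finset.univ.filter fun X : Fin n → Bool =>
      (Finset.univ.filter fun i => X i = true).card <
        (Finset.univ.filter fun i => X i = false).card) := by
      rw [← Finset.filter_or]
      ext X
      simp only [Finset.mem_filter, Finset.mem_univ, true_and]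
      omega
    rw [this, Finset.card_union_of_disjoint, ← count_symm n, two_mul]
    rw [Finset.disjoint_filter]
    intro X _ h
    omega
  have h1 := Finset.card_filter_add_card_filter_not (s := (Finset.univ : Finset (Fin n → Bool)))
    (p := fun X => (Finset.univ.filter fun i => X i = false).card =
        (Finset.univ.filter fun i => X i = true).card)
  rw [Finset.card_univ, Fintype.card_fun, Fintype.card_fin, Fintype.card_bool] at h1
  rw [h2] at h1
  exact (Nat.add_comm _ _).trans h1

lemma arith_aux (A C N s : ℕ) (hs1 : 1 ≤ s) (hsN : s + 1 ≤ N)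
    (hkey : 2 * A + C = 2 ^ N) (hApos : 0 < A)
    (hv : padicValNat 2 C = s) (hCpos : 0 < C) :
    padicValNat 2 A = s - 1 := by
  haveI : Fact (Nat.Prime 2) := ⟨Nat.prime_two⟩
  have hfac : C.factorization 2 = s := by
    rw [Nat.factorization_def _ Nat.prime_two, hv]
  have hCu : 2 ^ s * (C / 2 ^ s) = C := by
    have h := Nat.ordProj_mul_ordCompl_eq_self C 2
    rwa [hfac] at h
  set u := C / 2 ^ s with hudef
  have hu_odd : ¬ 2 ∣ u := by
    have h := Nat.not_dvd_ordCompl Nat.prime_two (by omega : C ≠ 0)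
    rwa [hfac] at h
  have hClt : C < 2 ^ N := by omega
  have hule : u < 2 ^ (N - s) := by
    by_contra h
    push_neg at h
    have h1 : 2 ^ N = 2 ^ s * 2 ^ (N - s) := by
      rw [← pow_add]; congr 1; omega
    have h2 : 2 ^ s * 2 ^ (N - s) ≤ 2 ^ s * u := Nat.mul_le_mul_left _ h
    omega
  set w := 2 ^ (N - s) - u with hwdef
  have hw2A : 2 * A = 2 * (2 ^ (s - 1) * w) := by
    have hps : 2 * 2 ^ (s - 1) = 2 ^ s := by
      rw [← pow_succ']; congr 1; omega
    calc 2 * A = 2 ^ N - C := by omega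
    _ = 2 ^ s * 2 ^ (N - s) - 2 ^ s * u := by
        rw [← pow_add, hCu]; congr 2; omega
    _ = 2 ^ s * w := by rw [hwdef, Nat.mul_sub]
    _ = 2 * (2 ^ (s - 1) * w) := by rw [← mul_assoc, hps]
  have hA : A = 2 ^ (s - 1) * w := by omega
  have hw_odd : ¬ 2 ∣ w := by
    intro h
    have h2 : (2 : ℕ) ∣ 2 ^ (N - s) := dvd_pow_self 2 (by omega)
    have hu' : u = 2 ^ (N - s) - w := by omega
    exact hu_odd (hu' ▸ Nat.dvd_sub h2 h)
  have hw_pos : w ≠ 0 := by omega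
  rw [hA, padicValNat.mul (by positivity) hw_pos, padicValNat.prime_pow,
    padicValNat.eq_zero_of_not_dvd hw_odd]
  omega


/-- For N = 2m with m ≥ 1, the 2-adic valuation of the number of binary strings
of length N with strictly more ones than zeros equals w(N) - 1. -/
theorem stmt_4 (m : ℕ) (hm : 1 ≤ m) :
    padicValNat 2
        (Finset.univ.filter fun X : Fin (2 * m) → Bool =>
          (Finset.univ.filter fun i => X i = false).card <
            (Finset.univ.filter fun i => X i = true).card).card =
      (Nat.digits 2 (2 * m)).sum - 1 := by
  haveI : Fact (Nat.Prime 2) := ⟨Nat.prime_two⟩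
  have hdig : Nat.digits 2 (2 * m) = 0 :: Nat.digits 2 m := by
    rw [Nat.digits_def' (by norm_num : (1:ℕ) < 2) (by omega : 0 < 2 * m)]
    congr 1
    · omega
    · congr 1; omega
  have hsum : (Nat.digits 2 (2 * m)).sum = (Nat.digits 2 m).sum := by
    rw [hdig]; simp
  have hv : padicValNat 2 ((2 * m).choose m) = (Nat.digits 2 m).sum := by
    have h := sub_one_mul_padicValNat_choose_eq_sub_sum_digits (p := 2)
      (k := m) (n := 2 * m) (by omega)
    have h2 : 2 * m - m = m := by omega
    rw [h2, hsum] at h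
    omega
  have hspos : 1 ≤ (Nat.digits 2 m).sum := by
    by_contra h
    push_neg at h
    have hm0 : m ≠ 0 := by omega
    have hnil : Nat.digits 2 m ≠ [] := Nat.digits_ne_nil_iff_ne_zero.mpr hm0
    have hlast := Nat.getLast_digit_ne_zero 2 hm0
    have hmem := List.getLast_mem hnil
    have hz : (Nat.digits 2 m).sum = 0 := by omega
    exact hlast (List.sum_eq_zero_iff.mp hz _ hmem)
  have hsle : (Nat.digits 2 m).sum ≤ m := Nat.digit_sum_le 2 m
  have hsN : (Nat.digits 2 m).sum + 1 ≤ 2 * m := by omega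
  have hCpos : 0 < (2 * m).choose m := Nat.choose_pos (by omega)
  have hmid : (Finset.univ.filter fun X : Fin (2 * m) → Bool =>
      (Finset.univ.filter fun i => X i = false).card =
        (Finset.univ.filter fun i => X i = true).card).card = (2 * m).choose m := by
    rw [← count_true_eq (2 * m) m]
    congr 1
    ext X
    simp only [Finset.mem_filter, Finset.mem_univ, true_and]
    have h0 := Finset.card_filter_add_card_filter_not
      (s := (Finset.univ : Finset (Fin (2 * m)))) (p := fun i => X i = false)
    have e : (Finset.univ.filter fun i => ¬ X i = false) =
        (Finset.univ.filter fun i => X i = true) := by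
      ext i; simp
    rw [e, Finset.card_univ, Fintype.card_fin] at h0
    omega
  have hApos : 0 < (Finset.univ.filter fun X : Fin (2 * m) → Bool =>
          (Finset.univ.filter fun i => X i = false).card <
            (Finset.univ.filter fun i => X i = true).card).card := by
    rw [Finset.card_pos]
    refine ⟨fun _ => true, Finset.mem_filter.mpr ⟨Finset.mem_univ _, ?_⟩⟩
    have e1 : (Finset.univ.filter fun _ : Fin (2 * m) => (true : Bool) = false) = ∅ := by
      ext i; simp
    have e2 : (Finset.univ.filter fun _ : Fin (2 * m) => (true : Bool) = true) =
        Finset.univ := by ext i; simp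
    show (Finset.univ.filter fun _ : Fin (2 * m) => (true : Bool) = false).card <
      (Finset.univ.filter fun _ : Fin (2 * m) => (true : Bool) = true).card
    rw [e1, e2, Finset.card_empty, Finset.card_univ, Fintype.card_fin]
    exact Nat.mul_pos (by norm_num) hm
  have key := count_main (2 * m)
  rw [hmid] at key
  rw [hsum]
  exact arith_aux _ _ (2 * m) _ hspos hsN key hApos hv hCpos
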